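/- The only rational solutions of x³ + y³ = 1 are (x, y) = (1, 0) and (x, y) = (0, 1). Equivalently, the group of rational points of the elliptic curve E₁ = X₀(27) has exactly three elements. -/

import Mathlib

/-- The only rational solutions of `x³ + y³ = 1` are `(1, 0)` and `(0, 1)`.
Equivalently, the group of rational points of the elliptic curve
`E₁ = X₀(27) : y² = x³ - 432` has exactly three elements. -/
theorem fermat_cubic_rational_points :
    (∀ x y : ℚ, x ^ 3 + y ^ 3 = 1 → (x, y) = (1, 0) ∨ (x, y) = (0, 1)) ∧
    Nat.card (WeierstrassCurve.Affine.Point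
      ({ a₁ := 0, a₂ := 0, a₃ := 0, a₄ := 0, a₆ := -432 } :
        WeierstrassCurve.Affine ℚ)) = 3 := by
  have flt3 : FermatLastTheoremWith ℚ 3 :=
    fermatLastTheoremFor_iff_rat.mp fermatLastTheoremThree
  have part1 : ∀ x y : ℚ, x ^ 3 + y ^ 3 = 1 → (x, y) = (1, 0) ∨ (x, y) = (0, 1) := by
    intro x y h
    have cube_one : ∀ t : ℚ, t ^ 3 = 1 → t = 1 := by
      intro t ht
      have h1 : (t - 1) * (t ^ 2 + t + 1) = 0 := by ring_nf; linarith
      have h2 : t ^ 2 + t + 1 > 0 := by nlinarith [sq_nonneg (t + 1/2)]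
      have := mul_eq_zero.mp h1
      rcases this with h | h
      · linarith
      · linarith
    by_cases hx : x = 0
    · right
      subst hx
      rw [cube_one y (by linarith)]
    by_cases hy : y = 0
    · left
      subst hy
      rw [cube_one x (by linarith)]
    exact absurd h (flt3 x y 1 hx hy one_ne_zero)
  refine ⟨part1, ?_⟩
  set W : WeierstrassCurve.Affine ℚ :=
    { a₁ := 0, a₂ := 0, a₃ := 0, a₄ := 0, a₆ := -432 } with hW
  have hns : ∀ x y : ℚ, y ^ 2 = x ^ 3 - 432 → W.Nonsingular x y := by
    intro x y h
    rw [WeierstrassCurve.Affine.nonsingular_iff, WeierstrassCurve.Affine.equation_iff]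
    constructor
    · simp [hW]; linarith
    · simp only [hW]
      by_contra hc
      push_neg at hc
      obtain ⟨h1, h2⟩ := hc
      have hy : y = 0 := by
        have : y = -y := by simpa using h2
        linarith
      have hx : x = 0 := by
        have : 3 * x ^ 2 = 0 := by linarith [h1]
        nlinarith
      rw [hx, hy] at h
      norm_num at h
  have hP1 : W.Nonsingular 12 36 := hns 12 36 (by norm_num)
  have hP2 : W.Nonsingular 12 (-36) := hns 12 (-36) (by norm_num)
  have huniv : (Set.univ : Set W.Point) =
      {WeierstrassCurve.Affine.Point.zero,
       WeierstrassCurve.Affine.Point.some _ _ hP1,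
       WeierstrassCurve.Affine.Point.some _ _ hP2} := by
    ext P
    simp only [Set.mem_univ, Set.mem_insert_iff, Set.mem_singleton_iff, true_iff]
    cases P with
    | zero => left; rfl
    | some X Y h =>
      right
      have heq : Y ^ 2 = X ^ 3 - 432 := by
        have := (WeierstrassCurve.Affine.equation_iff (W := W) X Y).mp h.1
        simp [hW] at this
        linarith
      have hX : X ≠ 0 := by
        intro h0
        rw [h0] at heq
        nlinarith [sq_nonneg Y]
      set u : ℚ := (36 + Y) / (6 * X) with hu
      set v : ℚ := (36 - Y) / (6 * X) with hv
      have hsol : u ^ 3 + v ^ 3 = 1 := by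
        rw [hu, hv]
        field_simp
        ring_nf
        nlinarith [heq]
      rcases part1 u v hsol with h' | h'
      · left
        have h1 : u = 1 := by simpa using congrArg Prod.fst h'
        have h2 : v = 0 := by simpa using congrArg Prod.snd h'
        rw [hu] at h1; rw [hv] at h2
        have hY : Y = 36 := by
          field_simp at h2; linarith
        have hX12 : X = 12 := by
          field_simp at h1; linarith
        subst hY hX12
        rfl
      · right
        have h1 : u = 0 := by simpa using congrArg Prod.fst h'
        have h2 : v = 1 := by simpa using congrArg Prod.snd h'
        rw [hu] at h1; rw [hv] at h2
        have hY : Y = -36 := by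
          field_simp at h1; linarith
        have hX12 : X = 12 := by
          field_simp at h2; linarith
        subst hY hX12
        rfl
  have h01 : (WeierstrassCurve.Affine.Point.zero : W.Point) ≠
      WeierstrassCurve.Affine.Point.some _ _ hP1 := by simp
  have h02 : (WeierstrassCurve.Affine.Point.zero : W.Point) ≠
      WeierstrassCurve.Affine.Point.some _ _ hP2 := by simp
  have h12 : (WeierstrassCurve.Affine.Point.some _ _ hP1 : W.Point) ≠
      WeierstrassCurve.Affine.Point.some _ _ hP2 := by
    intro h
    simp only [WeierstrassCurve.Affine.Point.some.injEq] at h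
    norm_num at h
  rw [← Set.ncard_univ, huniv]
  rw [Set.ncard_eq_three]
  exact ⟨_, _, _, h01, h02, h12, rfl⟩
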